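/- Let k be a field of characteristic p > 0 and suppose u, v ∈ k⟦x,y⟧ satisfy u = x^p(c₀ + f₀ y + x Λ₀) and v = τ₀(y) y^p + e₀ x + x Ω₀ with c₀, f₀, e₀ ∈ k nonzero, τ₀(y) ∈ k⟦y⟧ a unit power series, Λ₀, Ω₀ ∈ k⟦x,y⟧ and Ω₀ with zero constant term. Fix an integer i with 1 ≤ i < p and let σ_i : k⟦x,y⟧ → k⟦X,Y⟧ be the unique continuous k-algebra homomorphism with σ_i(x) = X·Y^i and σ_i(y) = Y. Then for every one-variable power series ψ(T) ∈ k⟦T⟧ with ψ(0) = 0, every unit λ ∈ k⟦X,Y⟧, and every natural number a, we have σ_i(u) − ψ(σ_i(v)) ≠ λ·Y^a in k⟦X,Y⟧. -/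

import Mathlib

open MvPowerSeries

/-- The maximal ideal of the two-variable formal power series ring
`k⟦x,y⟧` over a field `k`: the series with zero constant term. -/
noncomputable def psMaxIdeal (k : Type) [Field k] : Ideal (MvPowerSeries (Fin 2) k) :=
  RingHom.ker (MvPowerSeries.constantCoeff (σ := Fin 2) (R := k))

/-- `σ : k⟦x,y⟧ →+* k⟦X,Y⟧` is the substitution homomorphism `x ↦ a`,
`y ↦ b`: a `k`-algebra homomorphism, continuous for the maximal-adic
topologies, sending the two variables to `a` and `b`.  (Such a continuous
`k`-algebra homomorphism is unique when it exists, namely when `a` and `b`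
have zero constant term.) -/
def IsSubstitutionHom (k : Type) [Field k]
    (σ : MvPowerSeries (Fin 2) k →+* MvPowerSeries (Fin 2) k)
    (a b : MvPowerSeries (Fin 2) k) : Prop :=
  (∀ c : k, σ (MvPowerSeries.C (σ := Fin 2) (R := k) c) = MvPowerSeries.C (σ := Fin 2) (R := k) c) ∧
  σ (MvPowerSeries.X 0) = a ∧ σ (MvPowerSeries.X 1) = b ∧
  ∀ n : ℕ, ∃ m : ℕ, ∀ F ∈ (psMaxIdeal k) ^ m, σ F ∈ (psMaxIdeal k) ^ n

/-- `ε : k⟦T⟧ →+* k⟦X,Y⟧` is the substitution homomorphism `T ↦ w`: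
a `k`-algebra homomorphism, continuous for the maximal-adic topologies,
sending `T` to `w`. -/
def IsSubstitutionHom₁ (k : Type) [Field k]
    (ε : PowerSeries k →+* MvPowerSeries (Fin 2) k)
    (w : MvPowerSeries (Fin 2) k) : Prop :=
  (∀ c : k, ε (PowerSeries.C (R := k) c) = MvPowerSeries.C (σ := Fin 2) (R := k) c) ∧
  ε PowerSeries.X = w ∧
  ∀ n : ℕ, ∃ m : ℕ,
    ∀ F ∈ (RingHom.ker (PowerSeries.constantCoeff (R := k))) ^ m, ε F ∈ (psMaxIdeal k) ^ n

namespace Stmt11Aux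
open Finsupp Finset
variable {k : Type} [Field k]





theorem fin2_01 : (0 : Fin 2) ≠ 1 := by decide

/-- The exponent `(a, b)`. -/
noncomputable def mn (a b : ℕ) : Fin 2 →₀ ℕ := Finsupp.single 0 a + Finsupp.single 1 b

@[simp] theorem mn_apply_zero (a b : ℕ) : mn a b 0 = a := by
  simp [mn, Finsupp.single_apply]

@[simp] theorem mn_apply_one (a b : ℕ) : mn a b 1 = b := by
  simp [mn, Finsupp.single_apply]

theorem fin2_ext {e f : Fin 2 →₀ ℕ} (h0 : e 0 = f 0) (h1 : e 1 = f 1) : e = f := by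
  ext j
  fin_cases j
  · exact h0
  · exact h1

theorem eq_mn (e : Fin 2 →₀ ℕ) : e = mn (e 0) (e 1) :=
  fin2_ext (by simp) (by simp)

theorem mn_zero : mn 0 0 = (0 : Fin 2 →₀ ℕ) := by
  simp [mn]

theorem mn_le {a b c d : ℕ} : mn c d ≤ mn a b ↔ c ≤ a ∧ d ≤ b := by
  constructor
  · intro h
    exact ⟨by simpa using h 0, by simpa using h 1⟩
  · rintro ⟨h1, h2⟩ j
    fin_cases j
    · simpa using h1
    · simpa using h2

theorem mn_sub {a b c d : ℕ} : mn a b - mn c d = mn (a - c) (b - d) :=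
  fin2_ext (by simp [Finsupp.tsub_apply]) (by simp [Finsupp.tsub_apply])

theorem X01_pow_eq (c d : ℕ) :
    (X 0 : MvPowerSeries (Fin 2) k) ^ c * X 1 ^ d = monomial (R := k) (mn c d) 1 := by
  rw [X_pow_eq, X_pow_eq, monomial_mul_monomial, one_mul]; rfl

theorem coeff_mn_monXX (a b c d : ℕ) (F : MvPowerSeries (Fin 2) k) :
    coeff (R := k) (mn a b) ((X 0) ^ c * (X 1) ^ d * F) =
      if c ≤ a ∧ d ≤ b then coeff (R := k) (mn (a - c) (b - d)) F else 0 := by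
  rw [X01_pow_eq, coeff_monomial_mul]
  by_cases h : c ≤ a ∧ d ≤ b
  · rw [if_pos (mn_le.mpr h), if_pos h, one_mul, mn_sub]
  · rw [if_neg (fun hh => h (mn_le.mp hh)), if_neg h]

theorem coeff_mn_mul_X1pow (a b d : ℕ) (F : MvPowerSeries (Fin 2) k) :
    coeff (R := k) (mn a b) (F * (X 1) ^ d) =
      if d ≤ b then coeff (R := k) (mn a (b - d)) F else 0 := by
  have : (X 1 : MvPowerSeries (Fin 2) k) ^ d = monomial (R := k) (mn 0 d) 1 := by
    rw [← X01_pow_eq, pow_zero, one_mul]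
  rw [this, coeff_mul_monomial]
  by_cases h : d ≤ b
  · rw [if_pos (mn_le.mpr ⟨Nat.zero_le a, h⟩), if_pos h, mul_one, mn_sub, Nat.sub_zero]
  · rw [if_neg (fun hh => h (mn_le.mp hh).2), if_neg h]

theorem coeff_mn_X1pow_mul (a b d : ℕ) (F : MvPowerSeries (Fin 2) k) :
    coeff (R := k) (mn a b) ((X 1) ^ d * F) =
      if d ≤ b then coeff (R := k) (mn a (b - d)) F else 0 := by
  have h : (X 1 : MvPowerSeries (Fin 2) k) ^ d * F = (X 0) ^ 0 * (X 1) ^ d * F := by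
    rw [pow_zero, one_mul]
  rw [h, coeff_mn_monXX]
  by_cases hd : d ≤ b
  · rw [if_pos ⟨Nat.zero_le a, hd⟩, Nat.sub_zero, if_pos hd]
  · rw [if_neg (fun hh => hd hh.2), if_neg hd]

theorem coeff_mn_X0_mul_zero (b : ℕ) (F : MvPowerSeries (Fin 2) k) :
    coeff (R := k) (mn 0 b) ((X 0) * F) = 0 := by
  have h : (X 0 : MvPowerSeries (Fin 2) k) * F = (X 0) ^ 1 * (X 1) ^ 0 * F := by
    rw [pow_one, pow_zero, mul_one]
  rw [h, coeff_mn_monXX, if_neg]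
  rintro ⟨h1, -⟩; omega

theorem coeff_mn_zero_zero (F : MvPowerSeries (Fin 2) k) :
    coeff (R := k) (mn 0 0) F = constantCoeff (σ := Fin 2) (R := k) F := by
  rw [mn_zero, coeff_zero_eq_constantCoeff]

/-- vanishing of low coefficients of elements of powers of the maximal ideal -/
theorem coeff_eq_zero_of_mem_pow {N : ℕ} {F : MvPowerSeries (Fin 2) k}
    (hF : F ∈ (RingHom.ker (MvPowerSeries.constantCoeff (σ := Fin 2) (R := k))) ^ N)
    {e : Fin 2 →₀ ℕ} (he : e 0 + e 1 < N) : coeff (R := k) e F = 0 := by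
  classical
  induction N generalizing F e with
  | zero => omega
  | succ N ih =>
    rw [pow_succ] at hF
    refine Submodule.mul_induction_on hF (fun f hf g hg => ?_) (fun x y hx hy => ?_) e he
    · intro e he
      rw [coeff_mul]
      refine Finset.sum_eq_zero fun q hq => ?_
      have hsum := Finset.HasAntidiagonal.mem_antidiagonal.mp hq
      by_cases h2 : q.2 = 0
      · have : coeff (R := k) q.2 g = 0 := by
          rw [h2, coeff_zero_eq_constantCoeff]
          exact hg
        rw [this, mul_zero]
      · have hpos : 1 ≤ q.2 0 + q.2 1 := by
          by_contra hcon
          push_neg at hcon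
          exact h2 (fin2_ext (by simp only [Finsupp.coe_zero, Pi.zero_apply]; omega) (by simp only [Finsupp.coe_zero, Pi.zero_apply]; omega))
        have h0 : q.1 0 + q.2 0 = e 0 := by rw [← Finsupp.add_apply, hsum]
        have h1 : q.1 1 + q.2 1 = e 1 := by rw [← Finsupp.add_apply, hsum]
        have : coeff (R := k) q.1 f = 0 := ih hf (by omega)
        rw [this, zero_mul]
    · intro e he
      rw [map_add, hx e he, hy e he, add_zero]


/-- partial derivative in direction `s`, defined coefficientwise -/
noncomputable def D (s : Fin 2) (F : MvPowerSeries (Fin 2) k) : MvPowerSeries (Fin 2) k :=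
  fun e => ((e s + 1 : ℕ) : k) * coeff (R := k) (e + Finsupp.single s 1) F

theorem coeff_D (s : Fin 2) (e : Fin 2 →₀ ℕ) (F : MvPowerSeries (Fin 2) k) :
    coeff (R := k) e (D s F) = ((e s + 1 : ℕ) : k) * coeff (R := k) (e + Finsupp.single s 1) F := rfl

theorem D_add (s : Fin 2) (F G : MvPowerSeries (Fin 2) k) :
    D s (F + G) = D s F + D s G := by
  apply MvPowerSeries.ext; intro e
  rw [map_add, coeff_D, coeff_D, coeff_D, map_add, mul_add]

theorem D_sub (s : Fin 2) (F G : MvPowerSeries (Fin 2) k) :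
    D s (F - G) = D s F - D s G := by
  apply MvPowerSeries.ext; intro e
  rw [map_sub, coeff_D, coeff_D, coeff_D, map_sub, mul_sub]

private theorem sum_fst (s : Fin 2) (e : Fin 2 →₀ ℕ) (F G : MvPowerSeries (Fin 2) k) :
    Finset.sum (Finset.HasAntidiagonal.antidiagonal (e + Finsupp.single s 1))
      (fun q : (Fin 2 →₀ ℕ) × (Fin 2 →₀ ℕ) =>
        ((q.1 s : ℕ) : k) * (coeff (R := k) q.1 F * coeff (R := k) q.2 G))
      = coeff (R := k) e (D s F * G) := by
  classical
  rw [coeff_mul]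
  rw [← Finset.sum_filter_of_ne (p := fun q : (Fin 2 →₀ ℕ) × (Fin 2 →₀ ℕ) => q.1 s ≠ 0)
    (fun q _ hq => by
      intro h0
      apply hq
      rw [h0, Nat.cast_zero, zero_mul])]
  refine Finset.sum_nbij' (i := fun q => (q.1 - Finsupp.single s 1, q.2))
    (j := fun q => (q.1 + Finsupp.single s 1, q.2)) ?_ ?_ ?_ ?_ ?_
  · rintro ⟨q1, q2⟩ hq
    simp only [Finset.mem_filter, Finset.HasAntidiagonal.mem_antidiagonal] at hq
    obtain ⟨hsum, hne⟩ := hq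
    have hle : Finsupp.single s 1 ≤ q1 := Finsupp.single_le_iff.mpr (by omega)
    rw [Finset.HasAntidiagonal.mem_antidiagonal]
    have : q1 - Finsupp.single s 1 + q2 + Finsupp.single s 1 = e + Finsupp.single s 1 := by
      rw [add_right_comm, tsub_add_cancel_of_le hle, hsum]
    exact add_right_cancel this
  · rintro ⟨q1, q2⟩ hq
    rw [Finset.HasAntidiagonal.mem_antidiagonal] at hq
    simp only [Finset.mem_filter, Finset.HasAntidiagonal.mem_antidiagonal]
    constructor
    · rw [add_right_comm, hq]
    · simp
  · rintro ⟨q1, q2⟩ hq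
    simp only [Finset.mem_filter, Finset.HasAntidiagonal.mem_antidiagonal] at hq
    have hle : Finsupp.single s 1 ≤ q1 := Finsupp.single_le_iff.mpr (by omega)
    simp only [Prod.mk.injEq]
    exact ⟨tsub_add_cancel_of_le hle, trivial⟩
  · rintro ⟨q1, q2⟩ _
    simp only [Prod.mk.injEq]
    exact ⟨add_tsub_cancel_right q1 _, trivial⟩
  · rintro ⟨q1, q2⟩ hq
    simp only [Finset.mem_filter, Finset.HasAntidiagonal.mem_antidiagonal] at hq
    obtain ⟨hsum, hne⟩ := hq
    have hle : Finsupp.single s 1 ≤ q1 := Finsupp.single_le_iff.mpr (by omega)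
    rw [coeff_D]
    have h1 : ((q1 - Finsupp.single s 1 : Fin 2 →₀ ℕ)) s = q1 s - 1 := by
      rw [Finsupp.tsub_apply, Finsupp.single_eq_same]
    have h2 : q1 - Finsupp.single s 1 + Finsupp.single s 1 = q1 :=
      tsub_add_cancel_of_le hle
    rw [h1, h2]
    have h3 : q1 s - 1 + 1 = q1 s := by omega
    rw [h3, mul_assoc]

private theorem sum_snd (s : Fin 2) (e : Fin 2 →₀ ℕ) (F G : MvPowerSeries (Fin 2) k) :
    Finset.sum (Finset.HasAntidiagonal.antidiagonal (e + Finsupp.single s 1))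
      (fun q : (Fin 2 →₀ ℕ) × (Fin 2 →₀ ℕ) =>
        ((q.2 s : ℕ) : k) * (coeff (R := k) q.1 F * coeff (R := k) q.2 G))
      = coeff (R := k) e (F * D s G) := by
  have hswap := Finsupp.sum_antidiagonal_swap (e + Finsupp.single s 1)
    (fun u v : Fin 2 →₀ ℕ => ((v s : ℕ) : k) * (coeff (R := k) u F * coeff (R := k) v G))
  rw [hswap]
  have hc : ∀ q ∈ Finset.HasAntidiagonal.antidiagonal (e + Finsupp.single s 1),
      (fun q : (Fin 2 →₀ ℕ) × (Fin 2 →₀ ℕ) =>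
        ((q.1 s : ℕ) : k) * (coeff (R := k) q.2 F * coeff (R := k) q.1 G)) q
      = (fun q : (Fin 2 →₀ ℕ) × (Fin 2 →₀ ℕ) =>
        ((q.1 s : ℕ) : k) * (coeff (R := k) q.1 G * coeff (R := k) q.2 F)) q := by
    intro q _
    simp only []
    ring
  rw [Finset.sum_congr rfl hc, sum_fst, mul_comm]

theorem D_mul (s : Fin 2) (F G : MvPowerSeries (Fin 2) k) :
    D s (F * G) = D s F * G + F * D s G := by
  apply MvPowerSeries.ext; intro e
  rw [map_add, ← sum_fst, ← sum_snd, ← Finset.sum_add_distrib, coeff_D, coeff_mul,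
    Finset.mul_sum]
  refine Finset.sum_congr rfl fun q hq => ?_
  have hsum := Finset.HasAntidiagonal.mem_antidiagonal.mp hq
  have hs : q.1 s + q.2 s = e s + 1 := by
    rw [← Finsupp.add_apply, hsum, Finsupp.add_apply, Finsupp.single_eq_same]
  rw [← hs, Nat.cast_add, add_mul]

theorem D_C (s : Fin 2) (c : k) : D s (MvPowerSeries.C (σ := Fin 2) (R := k) c) = 0 := by
  apply MvPowerSeries.ext; intro e
  rw [coeff_D, map_zero, MvPowerSeries.coeff_C, if_neg, mul_zero]
  intro h
  have := congrArg (fun f => f s) h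
  simp [Finsupp.add_apply, Finsupp.single_eq_same] at this

theorem D_one (s : Fin 2) : D s (1 : MvPowerSeries (Fin 2) k) = 0 := by
  have : (1 : MvPowerSeries (Fin 2) k) = MvPowerSeries.C (σ := Fin 2) (R := k) 1 := by
    rw [map_one]
  rw [this, D_C]

theorem D_X_self (s : Fin 2) : D s (X s : MvPowerSeries (Fin 2) k) = 1 := by
  apply MvPowerSeries.ext; intro e
  classical
  rw [coeff_D, MvPowerSeries.coeff_X, coeff_one]
  by_cases he : e = 0
  · subst he
    rw [if_pos (by rw [zero_add]), if_pos rfl]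
    simp
  · rw [if_neg, if_neg he, mul_zero]
    intro h
    apply he
    have : e + Finsupp.single s 1 = 0 + Finsupp.single s 1 := by rw [zero_add, h]
    exact add_right_cancel this

theorem D_X_ne (s t : Fin 2) (h : t ≠ s) : D s (X t : MvPowerSeries (Fin 2) k) = 0 := by
  apply MvPowerSeries.ext; intro e
  classical
  rw [coeff_D, map_zero, MvPowerSeries.coeff_X, if_neg, mul_zero]
  intro hh
  have := congrArg (fun f => f s) hh
  simp only [Finsupp.add_apply, Finsupp.single_eq_same] at this
  rw [Finsupp.single_apply, if_neg h] at this
  omega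

theorem D_pow_succ (s : Fin 2) (F : MvPowerSeries (Fin 2) k) (n : ℕ) :
    D s (F ^ (n + 1)) = ((n + 1 : ℕ) : MvPowerSeries (Fin 2) k) * F ^ n * D s F := by
  induction n with
  | zero => rw [pow_one, pow_zero]; push_cast; ring
  | succ n ih =>
    rw [pow_succ, D_mul, ih]
    push_cast
    rw [pow_succ]
    ring

theorem D_pow (s : Fin 2) (F : MvPowerSeries (Fin 2) k) (n : ℕ) :
    D s (F ^ n) = ((n : ℕ) : MvPowerSeries (Fin 2) k) * F ^ (n - 1) * D s F := by
  cases n with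
  | zero => rw [pow_zero, D_one]; push_cast; ring
  | succ n => rw [D_pow_succ]; rfl

theorem D_C_mul (s : Fin 2) (c : k) (F : MvPowerSeries (Fin 2) k) :
    D s (MvPowerSeries.C (σ := Fin 2) (R := k) c * F) = MvPowerSeries.C (σ := Fin 2) (R := k) c * D s F := by
  rw [D_mul, D_C, zero_mul, zero_add]

/-- binomial split, first order -/
theorem exists_pow_add (P x q : MvPowerSeries (Fin 2) k) (n : ℕ) :
    ∃ g, (P + x * q) ^ n = P ^ n + x * g := by
  induction n with
  | zero => exact ⟨0, by ring⟩
  | succ n ih =>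
    obtain ⟨g, hg⟩ := ih
    exact ⟨g * P + P ^ n * q + x * g * q, by rw [pow_succ, hg]; ring⟩

/-- binomial split, second order -/
theorem exists_pow_add2 (P Q : MvPowerSeries (Fin 2) k) (n : ℕ) :
    ∃ j, (P + Q) ^ n = P ^ n + ((n : ℕ) : MvPowerSeries (Fin 2) k) * P ^ (n - 1) * Q
      + Q ^ 2 * j := by
  induction n with
  | zero => exact ⟨0, by push_cast; ring⟩
  | succ n ih =>
    obtain ⟨j, hj⟩ := ih
    refine ⟨((n : ℕ) : MvPowerSeries (Fin 2) k) * P ^ (n - 1) + j * (P + Q), ?_⟩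
    rw [pow_succ, hj]
    have hcast : ((n + 1 : ℕ) : MvPowerSeries (Fin 2) k)
        = ((n : ℕ) : MvPowerSeries (Fin 2) k) + 1 := by push_cast; ring
    rw [hcast]
    have hkey : ((n : ℕ) : MvPowerSeries (Fin 2) k) * P ^ (n - 1) * P
        = ((n : ℕ) : MvPowerSeries (Fin 2) k) * P ^ n := by
      cases n with
      | zero => push_cast; ring
      | succ n => rw [Nat.add_sub_cancel, mul_assoc, ← pow_succ]
    have hn1 : n + 1 - 1 = n := rfl
    rw [hn1]
    calc (P ^ n + ((n : ℕ) : MvPowerSeries (Fin 2) k) * P ^ (n - 1) * Q + Q ^ 2 * j) * (P + Q)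
        = ((n : ℕ) : MvPowerSeries (Fin 2) k) * P ^ (n - 1) * P * Q
          + (P ^ (n + 1) + P ^ n * Q
          + ((n : ℕ) : MvPowerSeries (Fin 2) k) * P ^ (n - 1) * Q ^ 2 + Q ^ 2 * j * (P + Q)) := by
          rw [pow_succ]; ring
      _ = P ^ (n + 1) + (((n : ℕ) : MvPowerSeries (Fin 2) k) + 1) * P ^ n * Q
          + Q ^ 2 * (((n : ℕ) : MvPowerSeries (Fin 2) k) * P ^ (n - 1) + j * (P + Q)) := by
          rw [hkey]; ring


theorem D_zero (s : Fin 2) : D s (0 : MvPowerSeries (Fin 2) k) = 0 := by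
  apply MvPowerSeries.ext; intro e
  rw [coeff_D]; simp

/-- bundled version of `D s` -/
noncomputable def Dhom (s : Fin 2) : MvPowerSeries (Fin 2) k →+ MvPowerSeries (Fin 2) k where
  toFun := D s
  map_zero' := D_zero s
  map_add' := D_add s

/-- formal derivative of a one-variable power series -/
noncomputable def pd (ψ : PowerSeries k) : PowerSeries k :=
  PowerSeries.mk (fun n => ((n + 1 : ℕ) : k) * PowerSeries.coeff (R := k) (n + 1) ψ)

section eps

variable {ε : PowerSeries k →+* MvPowerSeries (Fin 2) k}
variable {V : MvPowerSeries (Fin 2) k}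

theorem eps_partial (hC : ∀ c : k, ε (PowerSeries.C (R := k) c) = MvPowerSeries.C (σ := Fin 2) (R := k) c)
    (hX : ε PowerSeries.X = V)
    (hV : MvPowerSeries.constantCoeff (σ := Fin 2) (R := k) V = 0) (φ : PowerSeries k) (N : ℕ) :
    ε φ - ∑ n ∈ Finset.range N,
        MvPowerSeries.C (σ := Fin 2) (R := k) (PowerSeries.coeff (R := k) n φ) * V ^ n
      ∈ (RingHom.ker (MvPowerSeries.constantCoeff (σ := Fin 2) (R := k))) ^ N := by
  have hsplit : φ = (∑ n ∈ Finset.range N, PowerSeries.C (R := k) (PowerSeries.coeff (R := k) n φ)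
      * PowerSeries.X ^ n)
      + PowerSeries.X ^ N * PowerSeries.mk (fun j => PowerSeries.coeff (R := k) (N + j) φ) := by
    ext j
    rw [map_add, map_sum, PowerSeries.coeff_X_pow_mul']
    simp only [PowerSeries.coeff_C_mul, PowerSeries.coeff_X_pow, mul_ite, mul_one, mul_zero]
    rw [Finset.sum_ite_eq (Finset.range N) j]
    by_cases hj : N ≤ j
    · rw [if_neg (by simp only [Finset.mem_range]; omega), if_pos hj,
        PowerSeries.coeff_mk, zero_add]
      have harith : N + (j - N) = j := by omega
      rw [harith]
    · rw [if_pos (Finset.mem_range.mpr (by omega)), if_neg hj, add_zero]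
  have happ := congrArg ε hsplit
  rw [map_add, map_sum, map_mul, map_pow, hX] at happ
  have hterm : ∀ n ∈ Finset.range N,
      ε (PowerSeries.C (R := k) (PowerSeries.coeff (R := k) n φ) * PowerSeries.X ^ n)
      = MvPowerSeries.C (σ := Fin 2) (R := k) (PowerSeries.coeff (R := k) n φ) * V ^ n := by
    intro n _
    rw [map_mul, map_pow, hC, hX]
  rw [Finset.sum_congr rfl hterm] at happ
  rw [happ, add_sub_cancel_left]
  exact Ideal.mul_mem_right _ _ (Ideal.pow_mem_pow (by rwa [RingHom.mem_ker]) N)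

theorem coeff_eps (hC : ∀ c : k, ε (PowerSeries.C (R := k) c) = MvPowerSeries.C (σ := Fin 2) (R := k) c)
    (hX : ε PowerSeries.X = V)
    (hV : MvPowerSeries.constantCoeff (σ := Fin 2) (R := k) V = 0) (φ : PowerSeries k) (e : Fin 2 →₀ ℕ) (N : ℕ) (hN : e 0 + e 1 < N) :
    coeff (R := k) e (ε φ) = coeff (R := k) e (∑ n ∈ Finset.range N,
      MvPowerSeries.C (σ := Fin 2) (R := k) (PowerSeries.coeff (R := k) n φ) * V ^ n) := by
  have h := coeff_eq_zero_of_mem_pow (eps_partial hC hX hV φ N) hN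
  rw [map_sub] at h
  exact sub_eq_zero.mp h

theorem D_eps (hC : ∀ c : k, ε (PowerSeries.C (R := k) c) = MvPowerSeries.C (σ := Fin 2) (R := k) c)
    (hX : ε PowerSeries.X = V)
    (hV : MvPowerSeries.constantCoeff (σ := Fin 2) (R := k) V = 0) (s : Fin 2) (φ : PowerSeries k) :
    D s (ε φ) = ε (pd φ) * D s V := by
  apply MvPowerSeries.ext; intro e
  have hδ : (Finsupp.single s 1 : Fin 2 →₀ ℕ) 0 + (Finsupp.single s 1 : Fin 2 →₀ ℕ) 1 = 1 := by
    fin_cases s <;> simp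
  set N := e 0 + e 1 + 2 with hNdef
  have hdeg : (e + Finsupp.single s 1 : Fin 2 →₀ ℕ) 0
      + (e + Finsupp.single s 1 : Fin 2 →₀ ℕ) 1 < N := by
    rw [Finsupp.add_apply, Finsupp.add_apply]
    omega
  have step1 : coeff (R := k) e (D s (ε φ)) = coeff (R := k) e (D s (∑ n ∈ Finset.range N,
      MvPowerSeries.C (σ := Fin 2) (R := k) (PowerSeries.coeff (R := k) n φ) * V ^ n)) := by
    rw [coeff_D, coeff_D, coeff_eps hC hX hV φ (e + Finsupp.single s 1) N hdeg]
  have step2 : D s (∑ n ∈ Finset.range N,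
      MvPowerSeries.C (σ := Fin 2) (R := k) (PowerSeries.coeff (R := k) n φ) * V ^ n)
      = (∑ n ∈ Finset.range (N - 1),
        MvPowerSeries.C (σ := Fin 2) (R := k) (PowerSeries.coeff (R := k) n (pd φ)) * V ^ n) * D s V := by
    have hDsum := map_sum (Dhom (k := k) s)
      (fun n => MvPowerSeries.C (σ := Fin 2) (R := k) (PowerSeries.coeff (R := k) n φ) * V ^ n)
      (Finset.range N)
    have hDsum' : D s (∑ n ∈ Finset.range N,
        MvPowerSeries.C (σ := Fin 2) (R := k) (PowerSeries.coeff (R := k) n φ) * V ^ n)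
        = ∑ n ∈ Finset.range N,
          D s (MvPowerSeries.C (σ := Fin 2) (R := k) (PowerSeries.coeff (R := k) n φ) * V ^ n) := hDsum
    rw [hDsum']
    have hterm : ∀ n ∈ Finset.range N,
        D s (MvPowerSeries.C (σ := Fin 2) (R := k) (PowerSeries.coeff (R := k) n φ) * V ^ n)
        = MvPowerSeries.C (σ := Fin 2) (R := k) (PowerSeries.coeff (R := k) n φ)
          * (((n : ℕ) : MvPowerSeries (Fin 2) k) * V ^ (n - 1) * D s V) := by
      intro n _
      rw [D_C_mul, D_pow]
    rw [Finset.sum_congr rfl hterm]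
    have hN1 : N = (N - 1) + 1 := by omega
    rw [hN1, Finset.sum_range_succ']
    simp only [Nat.cast_zero, zero_mul, mul_zero, add_zero]
    rw [Finset.sum_mul]
    refine Finset.sum_congr rfl fun n _ => ?_
    have hcast : ((n + 1 : ℕ) : MvPowerSeries (Fin 2) k)
        = MvPowerSeries.C (σ := Fin 2) (R := k) ((n + 1 : ℕ) : k) := (map_natCast _ _).symm
    rw [Nat.add_sub_cancel, hcast]
    have hpd : PowerSeries.coeff (R := k) n (pd φ)
        = ((n + 1 : ℕ) : k) * PowerSeries.coeff (R := k) (n + 1) φ := by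
      rw [pd, PowerSeries.coeff_mk]
    rw [hpd, map_mul]
    ring
  have step3 : coeff (R := k) e ((∑ n ∈ Finset.range (N - 1),
      MvPowerSeries.C (σ := Fin 2) (R := k) (PowerSeries.coeff (R := k) n (pd φ)) * V ^ n) * D s V)
      = coeff (R := k) e (ε (pd φ) * D s V) := by
    have hmem := eps_partial hC hX hV (pd φ) (N - 1)
    have hprod : ε (pd φ) * D s V - (∑ n ∈ Finset.range (N - 1),
        MvPowerSeries.C (σ := Fin 2) (R := k) (PowerSeries.coeff (R := k) n (pd φ)) * V ^ n) * D s V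
        ∈ (RingHom.ker (MvPowerSeries.constantCoeff (σ := Fin 2) (R := k))) ^ (N - 1) := by
      have heq : ε (pd φ) * D s V - (∑ n ∈ Finset.range (N - 1),
          MvPowerSeries.C (σ := Fin 2) (R := k) (PowerSeries.coeff (R := k) n (pd φ)) * V ^ n) * D s V
          = (ε (pd φ) - ∑ n ∈ Finset.range (N - 1),
            MvPowerSeries.C (σ := Fin 2) (R := k) (PowerSeries.coeff (R := k) n (pd φ)) * V ^ n) * D s V := by
        ring
      rw [heq]
      exact Ideal.mul_mem_right _ _ hmem
    have hvan := coeff_eq_zero_of_mem_pow hprod (by omega : e 0 + e 1 < N - 1)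
    rw [map_sub] at hvan
    exact (sub_eq_zero.mp hvan).symm
  rw [step1, step2, step3]

end eps

end Stmt11Aux


open Stmt11Aux

/-- With `u, v` as in the hypotheses, `1 ≤ i < p` and
`σᵢ : k⟦x,y⟧ → k⟦X,Y⟧` the substitution `x ↦ X Y^i`, `y ↦ Y`, for every
one-variable power series `ψ(T) ∈ k⟦T⟧` with `ψ(0) = 0`, every unit
`λ ∈ k⟦X,Y⟧` and every `a ∈ ℕ`, we have `σᵢ(u) - ψ(σᵢ(v)) ≠ λ Y^a`. -/
theorem stmt11 (k : Type) [Field k] (p : ℕ) (hp : p.Prime) [CharP k p]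
    (u v Λ Ω T : MvPowerSeries (Fin 2) k) (c₀ f₀ e₀ : k)
    (hc : c₀ ≠ 0) (hf : f₀ ≠ 0) (he : e₀ ≠ 0)
    -- `T` is a unit power series in `y` alone (`τ₀(y)`):
    (hTy : ∀ d : Fin 2 →₀ ℕ, d 0 ≠ 0 → MvPowerSeries.coeff (R := k) d T = 0)
    (hTu : MvPowerSeries.constantCoeff (σ := Fin 2) (R := k) T ≠ 0)
    (hΩ : MvPowerSeries.constantCoeff (σ := Fin 2) (R := k) Ω = 0)
    -- `u = x^p (c₀ + f₀ y + x Λ₀)`: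
    (hu : u = (MvPowerSeries.X 0) ^ p *
      (MvPowerSeries.C (σ := Fin 2) (R := k) c₀ + MvPowerSeries.C (σ := Fin 2) (R := k) f₀ * MvPowerSeries.X 1
        + MvPowerSeries.X 0 * Λ))
    -- `v = τ₀(y) y^p + e₀ x + x Ω₀`:
    (hv : v = T * (MvPowerSeries.X 1) ^ p
      + MvPowerSeries.C (σ := Fin 2) (R := k) e₀ * MvPowerSeries.X 0 + MvPowerSeries.X 0 * Ω)
    (i : ℕ) (hi1 : 1 ≤ i) (hip : i < p)
    (σ : MvPowerSeries (Fin 2) k →+* MvPowerSeries (Fin 2) k)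
    (hσ : IsSubstitutionHom k σ (MvPowerSeries.X 0 * MvPowerSeries.X 1 ^ i)
      (MvPowerSeries.X 1))
    (ψ : PowerSeries k) (hψ : PowerSeries.constantCoeff (R := k) ψ = 0)
    (ε : PowerSeries k →+* MvPowerSeries (Fin 2) k)
    (hε : IsSubstitutionHom₁ k ε (σ v))
    (lam : MvPowerSeries (Fin 2) k) (hlam : IsUnit lam) (a : ℕ) :
    σ u - ε ψ ≠ lam * (MvPowerSeries.X 1) ^ a := by
  classical
  intro H
  obtain ⟨hσC, hσx, hσy, -⟩ := hσ
  obtain ⟨hεC, hεX, -⟩ := hε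
  have hp0 : p ≠ 0 := hp.ne_zero
  have hp2 : 2 ≤ p := hp.two_le
  have hpk : ((p : ℕ) : k) = 0 := CharP.cast_eq_zero k p
  -- decomposition of Ω
  set A : MvPowerSeries (Fin 2) k :=
    (fun e => MvPowerSeries.coeff (R := k) (e + Finsupp.single 0 1) Ω) with hAdef
  set B : MvPowerSeries (Fin 2) k :=
    (fun e => if e 0 = 0 then MvPowerSeries.coeff (R := k) (e + Finsupp.single 1 1) Ω else 0)
    with hBdef
  have hcA : ∀ d : Fin 2 →₀ ℕ, MvPowerSeries.coeff (R := k) d A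
      = MvPowerSeries.coeff (R := k) (d + Finsupp.single 0 1) Ω := fun d => rfl
  have hcB : ∀ d : Fin 2 →₀ ℕ, MvPowerSeries.coeff (R := k) d B
      = if d 0 = 0 then MvPowerSeries.coeff (R := k) (d + Finsupp.single 1 1) Ω else 0 :=
    fun d => rfl
  have hA1 : MvPowerSeries.X 0 * A
      = MvPowerSeries.X 0 ^ 1 * MvPowerSeries.X 1 ^ 0 * A := by
    rw [pow_one, pow_zero, mul_one]
  have hB1 : MvPowerSeries.X 1 * B
      = MvPowerSeries.X 0 ^ 0 * MvPowerSeries.X 1 ^ 1 * B := by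
    rw [pow_one, pow_zero, one_mul]
  have hAco : ∀ a' b' : ℕ, MvPowerSeries.coeff (R := k) (mn a' b') (MvPowerSeries.X 0 * A)
      = if 1 ≤ a' then MvPowerSeries.coeff (R := k) (mn a' b') Ω else 0 := by
    intro a' b'
    rw [hA1, coeff_mn_monXX]
    by_cases h : 1 ≤ a'
    · rw [if_pos ⟨h, Nat.zero_le _⟩, if_pos h, hcA, Nat.sub_zero]
      have hidx : mn (a' - 1) b' + Finsupp.single 0 1 = mn a' b' := by
        apply fin2_ext <;> simp [Finsupp.add_apply, Finsupp.single_apply] <;> omega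
      rw [hidx]
    · rw [if_neg (fun hh => h hh.1), if_neg h]
  have hBco : ∀ a' b' : ℕ, MvPowerSeries.coeff (R := k) (mn a' b') (MvPowerSeries.X 1 * B)
      = if a' = 0 ∧ 1 ≤ b' then MvPowerSeries.coeff (R := k) (mn a' b') Ω else 0 := by
    intro a' b'
    rw [hB1, coeff_mn_monXX]
    by_cases h : 1 ≤ b'
    · rw [if_pos ⟨Nat.zero_le _, h⟩, hcB, Nat.sub_zero]
      by_cases h0 : a' = 0
      · rw [if_pos (by simp [h0]), if_pos ⟨h0, h⟩]
        have hidx : mn a' (b' - 1) + Finsupp.single 1 1 = mn a' b' := by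
          apply fin2_ext <;> simp [Finsupp.add_apply, Finsupp.single_apply] <;> omega
        rw [hidx]
      · rw [if_neg (by simpa using h0), if_neg (fun hh => h0 hh.1)]
    · rw [if_neg (fun hh => h hh.2), if_neg (fun hh => h hh.2)]
  have hABeq : Ω = MvPowerSeries.X 0 * A + MvPowerSeries.X 1 * B := by
    apply MvPowerSeries.ext; intro e
    rw [eq_mn e, map_add, hAco, hBco]
    rcases Nat.eq_zero_or_pos (e 0) with h0 | h0
    · rcases Nat.eq_zero_or_pos (e 1) with h1 | h1
      · rw [if_neg (by omega), if_neg (by omega), add_zero, h0, h1,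
          coeff_mn_zero_zero, hΩ]
      · rw [if_neg (by omega), if_pos ⟨by omega, by omega⟩, zero_add]
    · rw [if_pos (by omega), if_neg (by omega), add_zero]
  -- normal forms of σ u and σ v
  have hU : σ u = MvPowerSeries.X 0 ^ p * MvPowerSeries.X 1 ^ (i*p)
      * (MvPowerSeries.C (σ := Fin 2) (R := k) c₀ + MvPowerSeries.C (σ := Fin 2) (R := k) f₀ * MvPowerSeries.X 1)
      + MvPowerSeries.X 0 ^ (p+1) * MvPowerSeries.X 1 ^ (i*p+i) * σ Λ := by
    rw [hu]
    simp only [map_add, map_mul, map_pow, hσx, hσy, hσC]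
    ring
  have hV : σ v = σ T * MvPowerSeries.X 1 ^ p
      + MvPowerSeries.X 0 * MvPowerSeries.X 1 ^ i
        * (MvPowerSeries.C (σ := Fin 2) (R := k) e₀ + σ Ω) := by
    rw [hv]
    simp only [map_add, map_mul, map_pow, hσx, hσy, hσC]
    ring
  have ht : MvPowerSeries.constantCoeff (σ := Fin 2) (R := k) (σ T) ≠ 0 := by
    have hTun : IsUnit T :=
      MvPowerSeries.isUnit_iff_constantCoeff.mpr (isUnit_iff_ne_zero.mpr hTu)
    exact (MvPowerSeries.isUnit_constantCoeff _ (hTun.map σ)).ne_zero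
  have hccW : MvPowerSeries.constantCoeff (σ := Fin 2) (R := k) (σ Ω) = 0 := by
    have hσΩ : σ Ω = (MvPowerSeries.X 0 * MvPowerSeries.X 1 ^ i) * σ A
        + MvPowerSeries.X 1 * σ B := by
      rw [hABeq, map_add, map_mul, map_mul, hσx, hσy]
    rw [hσΩ]
    simp [MvPowerSeries.constantCoeff_X]
  have hccE : MvPowerSeries.constantCoeff (σ := Fin 2) (R := k) (MvPowerSeries.C (σ := Fin 2) (R := k) e₀ + σ Ω)
      = e₀ := by
    rw [map_add, MvPowerSeries.constantCoeff_C, hccW, add_zero]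
  have hccV : MvPowerSeries.constantCoeff (σ := Fin 2) (R := k) (σ v) = 0 := by
    rw [hV]
    simp [MvPowerSeries.constantCoeff_X, zero_pow hp0]
  have hcclam : MvPowerSeries.constantCoeff (σ := Fin 2) (R := k) lam ≠ 0 :=
    (MvPowerSeries.isUnit_constantCoeff _ hlam).ne_zero
  have hE : ε ψ = σ u - lam * MvPowerSeries.X 1 ^ a := by linear_combination -H
  -- row 0 of σ u vanishes
  have hcfu : ∀ b', MvPowerSeries.coeff (R := k) (mn 0 b') (σ u) = 0 := by
    intro b'
    rw [hU, map_add, coeff_mn_monXX, coeff_mn_monXX, if_neg, if_neg, add_zero]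
    · rintro ⟨h1, -⟩; omega
    · rintro ⟨h1, -⟩; omega
  -- ψ ≠ 0
  have hψne : ψ ≠ 0 := by
    intro h0
    have h1 : MvPowerSeries.coeff (R := k) (mn 0 a) (ε ψ)
        = MvPowerSeries.coeff (R := k) (mn 0 a) (σ u)
          - MvPowerSeries.coeff (R := k) (mn 0 a) (lam * MvPowerSeries.X 1 ^ a) := by
      rw [hE, map_sub]
    rw [h0, map_zero, map_zero, hcfu, coeff_mn_mul_X1pow, if_pos le_rfl, Nat.sub_self,
      coeff_mn_zero_zero] at h1
    apply hcclam
    linear_combination h1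
  have hexm : ∃ n, PowerSeries.coeff (R := k) n ψ ≠ 0 := by
    by_contra hcon
    push_neg at hcon
    exact hψne (PowerSeries.ext fun n => by rw [hcon n, map_zero])
  set m := Nat.find hexm with hmdef
  have hψm : PowerSeries.coeff (R := k) m ψ ≠ 0 := Nat.find_spec hexm
  have hψlt : ∀ n, n < m → PowerSeries.coeff (R := k) n ψ = 0 := fun n hn =>
    of_not_not (Nat.find_min hexm hn)
  have hm1 : 1 ≤ m := by
    rcases Nat.eq_zero_or_pos m with h | h
    · exfalso
      apply hψm
      rw [h, PowerSeries.coeff_zero_eq_constantCoeff]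
      exact hψ
    · exact h
  have hmpm : m ≤ p * m := Nat.le_mul_of_pos_left m (by omega)
  -- row 0 of ε ψ
  have hrow0 : ∀ b, b ≤ p * m → MvPowerSeries.coeff (R := k) (mn 0 b) (ε ψ)
      = (if b = p * m then PowerSeries.coeff (R := k) m ψ
          * (MvPowerSeries.constantCoeff (σ := Fin 2) (R := k) (σ T)) ^ m else 0) := by
    intro b hb
    rw [coeff_eps hεC hεX hccV ψ (mn 0 b) (p*m + 1) (by simp; omega), map_sum]
    have hterm : ∀ n ∈ Finset.range (p*m+1),
        MvPowerSeries.coeff (R := k) (mn 0 b)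
          (MvPowerSeries.C (σ := Fin 2) (R := k) (PowerSeries.coeff (R := k) n ψ) * (σ v) ^ n)
        = PowerSeries.coeff (R := k) n ψ * (if p * n ≤ b
            then MvPowerSeries.coeff (R := k) (mn 0 (b - p*n)) ((σ T) ^ n) else 0) := by
      intro n _
      rw [MvPowerSeries.coeff_C_mul]
      congr 1
      obtain ⟨g, hg⟩ := exists_pow_add (σ T * MvPowerSeries.X 1 ^ p) (MvPowerSeries.X 0)
        (MvPowerSeries.X 1 ^ i * (MvPowerSeries.C (σ := Fin 2) (R := k) e₀ + σ Ω)) n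
      have hv' : σ v = σ T * MvPowerSeries.X 1 ^ p
          + MvPowerSeries.X 0 * (MvPowerSeries.X 1 ^ i
            * (MvPowerSeries.C (σ := Fin 2) (R := k) e₀ + σ Ω)) := by
        rw [hV]; ring
      rw [hv', hg, map_add, coeff_mn_X0_mul_zero, add_zero, mul_pow, ← pow_mul,
        coeff_mn_mul_X1pow]
    rw [Finset.sum_congr rfl hterm]
    by_cases hbm : b = p * m
    · rw [if_pos hbm]
      rw [Finset.sum_eq_single m]
      · rw [if_pos (by omega), hbm, Nat.sub_self, coeff_mn_zero_zero, map_pow]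
      · intro n hn hne
        rcases lt_or_gt_of_ne hne with h | h
        · rw [hψlt n h, zero_mul]
        · rw [if_neg (by
            have : p * m < p * n := mul_lt_mul_of_pos_left h (by omega)
            omega), mul_zero]
      · intro hnotmem
        exact absurd (Finset.mem_range.mpr (by omega)) hnotmem
    · rw [if_neg hbm]
      refine Finset.sum_eq_zero fun n _ => ?_
      rcases lt_or_ge n m with h | h
      · rw [hψlt n h, zero_mul]
      · rw [if_neg (by
          have : p * m ≤ p * n := Nat.mul_le_mul_left p h
          omega), mul_zero]
  -- a = p * m
  have ha : a = p * m := by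
    by_contra hne
    rcases lt_or_gt_of_ne hne with hlt | hgt
    · have h1 : MvPowerSeries.coeff (R := k) (mn 0 a) (ε ψ)
          = MvPowerSeries.coeff (R := k) (mn 0 a) (σ u)
            - MvPowerSeries.coeff (R := k) (mn 0 a) (lam * MvPowerSeries.X 1 ^ a) := by
        rw [hE, map_sub]
      rw [hrow0 a (by omega), if_neg (by omega), hcfu, coeff_mn_mul_X1pow, if_pos le_rfl,
        Nat.sub_self, coeff_mn_zero_zero] at h1
      exact hcclam (by linear_combination h1)
    · have h1 : MvPowerSeries.coeff (R := k) (mn 0 (p*m)) (ε ψ)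
          = MvPowerSeries.coeff (R := k) (mn 0 (p*m)) (σ u)
            - MvPowerSeries.coeff (R := k) (mn 0 (p*m)) (lam * MvPowerSeries.X 1 ^ a) := by
        rw [hE, map_sub]
      rw [hrow0 (p*m) le_rfl, if_pos rfl, hcfu, coeff_mn_mul_X1pow, if_neg (by omega)] at h1
      have h2 : PowerSeries.coeff (R := k) m ψ
          * (MvPowerSeries.constantCoeff (σ := Fin 2) (R := k) (σ T)) ^ m = 0 := by
        rw [h1]; ring
      rcases mul_eq_zero.mp h2 with h | h
      · exact hψm h
      · exact pow_ne_zero m ht h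
  -- row 1 analysis: p ∣ m
  obtain ⟨m', hm'⟩ : ∃ m', m = m' + 1 := ⟨m - 1, by omega⟩
  have hmm1 : m - 1 = m' := by omega
  have hb1lt : p * m' + i < p * m := by
    have hx : p * m = p * m' + p := by rw [hm']; ring
    omega
  have hrow1 : MvPowerSeries.coeff (R := k) (mn 1 (p * m' + i)) (ε ψ)
      = PowerSeries.coeff (R := k) m ψ * (((m : ℕ) : k)
        * (MvPowerSeries.constantCoeff (σ := Fin 2) (R := k) (σ T)) ^ m' * e₀) := by
    rw [coeff_eps hεC hεX hccV ψ (mn 1 (p * m' + i)) (p*m + 2) (by simp; omega), map_sum]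
    have hterm : ∀ n ∈ Finset.range (p*m+2),
        MvPowerSeries.coeff (R := k) (mn 1 (p * m' + i))
          (MvPowerSeries.C (σ := Fin 2) (R := k) (PowerSeries.coeff (R := k) n ψ) * (σ v) ^ n)
        = PowerSeries.coeff (R := k) n ψ *
          ((if p * n ≤ p * m' + i
            then MvPowerSeries.coeff (R := k) (mn 1 (p * m' + i - p*n)) ((σ T) ^ n) else 0)
          + ((n : ℕ) : k) * (if p * (n-1) + i ≤ p * m' + i
            then MvPowerSeries.coeff (R := k) (mn 0 (p * m' + i - (p*(n-1)+i)))
              ((σ T) ^ (n-1) * (MvPowerSeries.C (σ := Fin 2) (R := k) e₀ + σ Ω)) else 0)) := by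
      intro n _
      rw [MvPowerSeries.coeff_C_mul]
      congr 1
      obtain ⟨j, hj⟩ := exists_pow_add2 (σ T * MvPowerSeries.X 1 ^ p)
        (MvPowerSeries.X 0 * MvPowerSeries.X 1 ^ i
          * (MvPowerSeries.C (σ := Fin 2) (R := k) e₀ + σ Ω)) n
      rw [hV, hj, map_add, map_add]
      have hc1 : MvPowerSeries.coeff (R := k) (mn 1 (p * m' + i))
          ((σ T * MvPowerSeries.X 1 ^ p) ^ n)
          = (if p * n ≤ p * m' + i
            then MvPowerSeries.coeff (R := k) (mn 1 (p * m' + i - p*n)) ((σ T) ^ n) else 0) := by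
        rw [mul_pow, ← pow_mul, coeff_mn_mul_X1pow]
      have hc2 : MvPowerSeries.coeff (R := k) (mn 1 (p * m' + i))
          (((n:ℕ) : MvPowerSeries (Fin 2) k) * (σ T * MvPowerSeries.X 1 ^ p) ^ (n-1)
            * (MvPowerSeries.X 0 * MvPowerSeries.X 1 ^ i
              * (MvPowerSeries.C (σ := Fin 2) (R := k) e₀ + σ Ω)))
          = ((n : ℕ) : k) * (if p * (n-1) + i ≤ p * m' + i
            then MvPowerSeries.coeff (R := k) (mn 0 (p * m' + i - (p*(n-1)+i)))
              ((σ T) ^ (n-1) * (MvPowerSeries.C (σ := Fin 2) (R := k) e₀ + σ Ω)) else 0) := by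
        have harr : ((n:ℕ) : MvPowerSeries (Fin 2) k) * (σ T * MvPowerSeries.X 1 ^ p) ^ (n-1)
            * (MvPowerSeries.X 0 * MvPowerSeries.X 1 ^ i
              * (MvPowerSeries.C (σ := Fin 2) (R := k) e₀ + σ Ω))
            = MvPowerSeries.C (σ := Fin 2) (R := k) ((n : ℕ) : k)
              * (MvPowerSeries.X 0 ^ 1 * MvPowerSeries.X 1 ^ (p * (n-1) + i)
                * ((σ T) ^ (n-1) * (MvPowerSeries.C (σ := Fin 2) (R := k) e₀ + σ Ω))) := by
          rw [← map_natCast (MvPowerSeries.C (σ := Fin 2) (R := k)) n, mul_pow, ← pow_mul, pow_add,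
            pow_one]
          ring
        rw [harr, MvPowerSeries.coeff_C_mul, coeff_mn_monXX]
        congr 1
        by_cases hcond : p * (n-1) + i ≤ p * m' + i
        · rw [if_pos ⟨le_rfl, hcond⟩, if_pos hcond, Nat.sub_self]
        · rw [if_neg (fun hh => hcond hh.2), if_neg hcond]
      have hc3 : MvPowerSeries.coeff (R := k) (mn 1 (p * m' + i))
          ((MvPowerSeries.X 0 * MvPowerSeries.X 1 ^ i
            * (MvPowerSeries.C (σ := Fin 2) (R := k) e₀ + σ Ω)) ^ 2 * j) = 0 := by
        have harr2 : (MvPowerSeries.X 0 * MvPowerSeries.X 1 ^ i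
            * (MvPowerSeries.C (σ := Fin 2) (R := k) e₀ + σ Ω)) ^ 2 * j
            = MvPowerSeries.X 0 ^ 2 * MvPowerSeries.X 1 ^ (2*i)
              * ((MvPowerSeries.C (σ := Fin 2) (R := k) e₀ + σ Ω) ^ 2 * j) := by
          rw [pow_mul]
          ring
        rw [harr2, coeff_mn_monXX, if_neg]
        rintro ⟨hh, -⟩; omega
      rw [hc1, hc2, hc3, add_zero]
    rw [Finset.sum_congr rfl hterm]
    rw [Finset.sum_eq_single m]
    · rw [hmm1, if_neg (by omega), if_pos le_rfl, Nat.sub_self, coeff_mn_zero_zero,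
        map_mul, map_pow, hccE]
      ring
    · intro n hn hne
      rcases lt_or_gt_of_ne hne with h | h
      · rw [hψlt n h, zero_mul]
      · have hgt1 : p * m < p * n := mul_lt_mul_of_pos_left h (by omega)
        have hgt2 : p * m' < p * (n - 1) := mul_lt_mul_of_pos_left (by omega) (by omega)
        rw [if_neg (by omega), if_neg (by omega)]
        ring
    · intro hnotmem
      exact absurd (Finset.mem_range.mpr (by omega)) hnotmem
  have hmk : ((m : ℕ) : k) = 0 := by
    have h1 : MvPowerSeries.coeff (R := k) (mn 1 (p*m'+i)) (ε ψ)
        = MvPowerSeries.coeff (R := k) (mn 1 (p*m'+i)) (σ u)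
          - MvPowerSeries.coeff (R := k) (mn 1 (p*m'+i)) (lam * MvPowerSeries.X 1 ^ a) := by
      rw [hE, map_sub]
    have hu0 : MvPowerSeries.coeff (R := k) (mn 1 (p*m'+i)) (σ u) = 0 := by
      rw [hU, map_add, coeff_mn_monXX, coeff_mn_monXX, if_neg, if_neg, add_zero]
      · rintro ⟨hh, -⟩; omega
      · rintro ⟨hh, -⟩; omega
    have hlam0 : MvPowerSeries.coeff (R := k) (mn 1 (p*m'+i)) (lam * MvPowerSeries.X 1 ^ a)
        = 0 := by
      rw [coeff_mn_mul_X1pow, if_neg (by omega)]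
    rw [hrow1, hu0, hlam0] at h1
    by_contra hne
    have hnz : PowerSeries.coeff (R := k) m ψ * (((m:ℕ):k)
        * (MvPowerSeries.constantCoeff (σ := Fin 2) (R := k) (σ T)) ^ m' * e₀) ≠ 0 :=
      mul_ne_zero hψm (mul_ne_zero (mul_ne_zero hne (pow_ne_zero _ ht)) he)
    apply hnz
    rw [h1]
    ring
  have hpm : p ∣ m := (CharP.cast_eq_zero_iff k p m).mp hmk
  have hap : p * p ≤ a := by
    rw [ha]
    exact Nat.mul_le_mul_left p (Nat.le_of_dvd (by omega) hpm)
  have hak : ((a : ℕ) : k) = 0 := by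
    rw [ha]
    push_cast
    rw [hpk]
    ring
  have hipi : i * p + i < p * p := by
    have h1 : i * p + p ≤ p * p := by
      have h2 : (i + 1) * p ≤ p * p := Nat.mul_le_mul_right p (by omega)
      have h3 : (i + 1) * p = i * p + p := by ring
      omega
    omega
  -- the derivative elimination
  have hcross : D 1 (σ v) * D 0 (ε ψ) = D 0 (σ v) * D 1 (ε ψ) := by
    rw [D_eps hεC hεX hccV 0 ψ, D_eps hεC hεX hccV 1 ψ]
    ring
  rw [hE, D_sub, D_sub] at hcross
  have hpR : ((p : ℕ) : MvPowerSeries (Fin 2) k) = 0 := by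
    rw [← map_natCast (MvPowerSeries.C (σ := Fin 2) (R := k)) p, hpk, map_zero]
  have hp1R : ((p + 1 : ℕ) : MvPowerSeries (Fin 2) k) = 1 := by
    push_cast
    rw [hpR, zero_add]
  have haR : ((a : ℕ) : MvPowerSeries (Fin 2) k) = 0 := by
    rw [← map_natCast (MvPowerSeries.C (σ := Fin 2) (R := k)) a, hak, map_zero]
  have hipR : ((i * p : ℕ) : MvPowerSeries (Fin 2) k) = 0 := by
    push_cast
    rw [hpR]
    ring
  have hDX00 : D 0 (MvPowerSeries.X 0 : MvPowerSeries (Fin 2) k) = 1 := D_X_self 0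
  have hDX11 : D 1 (MvPowerSeries.X 1 : MvPowerSeries (Fin 2) k) = 1 := D_X_self 1
  have hDX01 : D 0 (MvPowerSeries.X 1 : MvPowerSeries (Fin 2) k) = 0 :=
    D_X_ne 0 1 (by decide)
  have hDX10 : D 1 (MvPowerSeries.X 0 : MvPowerSeries (Fin 2) k) = 0 :=
    D_X_ne 1 0 (by decide)
  have hD0X1pow : ∀ c : ℕ, D 0 ((MvPowerSeries.X 1 : MvPowerSeries (Fin 2) k) ^ c) = 0 := by
    intro c; rw [D_pow, hDX01, mul_zero]
  have hD1X0pow : ∀ c : ℕ, D 1 ((MvPowerSeries.X 0 : MvPowerSeries (Fin 2) k) ^ c) = 0 := by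
    intro c; rw [D_pow, hDX10, mul_zero]
  have hD0X0p : D 0 ((MvPowerSeries.X 0 : MvPowerSeries (Fin 2) k) ^ p) = 0 := by
    rw [D_pow, hDX00, mul_one, hpR, zero_mul]
  have hD0X0p1 : D 0 ((MvPowerSeries.X 0 : MvPowerSeries (Fin 2) k) ^ (p+1))
      = MvPowerSeries.X 0 ^ p := by
    rw [D_pow, hDX00, mul_one, hp1R, one_mul, Nat.add_sub_cancel]
  have hD1X1pow : ∀ c : ℕ, D 1 ((MvPowerSeries.X 1 : MvPowerSeries (Fin 2) k) ^ c)
      = ((c:ℕ) : MvPowerSeries (Fin 2) k) * MvPowerSeries.X 1 ^ (c-1) := by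
    intro c; rw [D_pow, hDX11, mul_one]
  have hDu0 : D 0 (σ u) = MvPowerSeries.X 0 ^ p * MvPowerSeries.X 1 ^ (i*p+i) * σ Λ
      + MvPowerSeries.X 0 ^ (p+1) * (MvPowerSeries.X 1 ^ (i*p+i) * D 0 (σ Λ)) := by
    rw [hU]
    simp only [D_add, D_mul, D_C, hD0X0p, hD0X1pow, hD0X0p1, hDX01]
    ring
  have hDu1 : D 1 (σ u) = MvPowerSeries.X 0 ^ p * MvPowerSeries.X 1 ^ (i*p)
      * MvPowerSeries.C (σ := Fin 2) (R := k) f₀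
      + MvPowerSeries.X 0 ^ (p+1)
        * (((i*p+i : ℕ) : MvPowerSeries (Fin 2) k) * MvPowerSeries.X 1 ^ (i*p+i-1) * σ Λ
          + MvPowerSeries.X 1 ^ (i*p+i) * D 1 (σ Λ)) := by
    rw [hU]
    simp only [D_add, D_mul, D_C, hD1X0pow, hD1X1pow, hDX11]
    rw [hipR]
    ring
  have hDlam0 : D 0 (lam * MvPowerSeries.X 1 ^ a) = D 0 lam * MvPowerSeries.X 1 ^ a := by
    rw [D_mul, hD0X1pow, mul_zero, add_zero]
  have hDlam1 : D 1 (lam * MvPowerSeries.X 1 ^ a) = D 1 lam * MvPowerSeries.X 1 ^ a := by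
    rw [D_mul, hD1X1pow, haR, zero_mul, mul_zero, add_zero]
  rw [hDu0, hDu1, hDlam0, hDlam1] at hcross
  have hccD1V : MvPowerSeries.constantCoeff (σ := Fin 2) (R := k) (D 1 (σ v)) = 0 := by
    have hidx : (0 : Fin 2 →₀ ℕ) + Finsupp.single 1 1 = mn 0 1 := by
      rw [zero_add]
      apply fin2_ext <;> simp
    have h1 : MvPowerSeries.constantCoeff (σ := Fin 2) (R := k) (D 1 (σ v))
        = MvPowerSeries.coeff (R := k) (mn 0 1) (σ v) := by
      rw [← MvPowerSeries.coeff_zero_eq_constantCoeff_apply, coeff_D, hidx]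
      simp
    rw [h1, hV, map_add, coeff_mn_mul_X1pow, if_neg (by omega), zero_add]
    have harr : MvPowerSeries.X 0 * MvPowerSeries.X 1 ^ i
        * (MvPowerSeries.C (σ := Fin 2) (R := k) e₀ + σ Ω)
        = MvPowerSeries.X 0 ^ 1 * MvPowerSeries.X 1 ^ i
          * (MvPowerSeries.C (σ := Fin 2) (R := k) e₀ + σ Ω) := by
      rw [pow_one]
    rw [harr, coeff_mn_monXX, if_neg]
    rintro ⟨hh, -⟩; omega
  have hcfD0V : MvPowerSeries.coeff (R := k) (mn 0 i) (D 0 (σ v)) = e₀ := by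
    have hidx : mn 0 i + Finsupp.single 0 1 = mn 1 i := by
      apply fin2_ext <;> simp [Finsupp.add_apply, Finsupp.single_apply]
    have h1 : MvPowerSeries.coeff (R := k) (mn 0 i) (D 0 (σ v))
        = MvPowerSeries.coeff (R := k) (mn 1 i) (σ v) := by
      rw [coeff_D, hidx, mn_apply_zero]
      norm_num
    rw [h1, hV, map_add, coeff_mn_mul_X1pow, if_neg (by omega), zero_add]
    have harr : MvPowerSeries.X 0 * MvPowerSeries.X 1 ^ i
        * (MvPowerSeries.C (σ := Fin 2) (R := k) e₀ + σ Ω)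
        = MvPowerSeries.X 0 ^ 1 * MvPowerSeries.X 1 ^ i
          * (MvPowerSeries.C (σ := Fin 2) (R := k) e₀ + σ Ω) := by
      rw [pow_one]
    rw [harr, coeff_mn_monXX, if_pos ⟨le_rfl, le_rfl⟩, Nat.sub_self, Nat.sub_self,
      coeff_mn_zero_zero, hccE]
  -- split both sides into standard terms
  have hLeq : D 1 (σ v) * ((MvPowerSeries.X 0 ^ p * MvPowerSeries.X 1 ^ (i*p+i) * σ Λ
      + MvPowerSeries.X 0 ^ (p+1) * (MvPowerSeries.X 1 ^ (i*p+i) * D 0 (σ Λ)))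
      - D 0 lam * MvPowerSeries.X 1 ^ a)
      = MvPowerSeries.X 0 ^ p * MvPowerSeries.X 1 ^ (i*p+i) * (D 1 (σ v) * σ Λ)
      + MvPowerSeries.X 0 ^ (p+1) * MvPowerSeries.X 1 ^ 0
        * (MvPowerSeries.X 1 ^ (i*p+i) * D 0 (σ Λ) * D 1 (σ v))
      - (D 1 (σ v) * D 0 lam) * MvPowerSeries.X 1 ^ a := by
    ring
  have hReq : D 0 (σ v) * ((MvPowerSeries.X 0 ^ p * MvPowerSeries.X 1 ^ (i*p)
      * MvPowerSeries.C (σ := Fin 2) (R := k) f₀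
      + MvPowerSeries.X 0 ^ (p+1)
        * (((i*p+i : ℕ) : MvPowerSeries (Fin 2) k) * MvPowerSeries.X 1 ^ (i*p+i-1) * σ Λ
          + MvPowerSeries.X 1 ^ (i*p+i) * D 1 (σ Λ)))
      - D 1 lam * MvPowerSeries.X 1 ^ a)
      = MvPowerSeries.X 0 ^ p * MvPowerSeries.X 1 ^ (i*p)
        * (MvPowerSeries.C (σ := Fin 2) (R := k) f₀ * D 0 (σ v))
      + MvPowerSeries.X 0 ^ (p+1) * MvPowerSeries.X 1 ^ 0
        * ((((i*p+i : ℕ) : MvPowerSeries (Fin 2) k) * MvPowerSeries.X 1 ^ (i*p+i-1) * σ Λ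
          + MvPowerSeries.X 1 ^ (i*p+i) * D 1 (σ Λ)) * D 0 (σ v))
      - (D 0 (σ v) * D 1 lam) * MvPowerSeries.X 1 ^ a := by
    ring
  rw [hLeq, hReq] at hcross
  have hfin := congrArg (MvPowerSeries.coeff (R := k) (mn p (i*p+i))) hcross
  have hT1 : MvPowerSeries.coeff (R := k) (mn p (i*p+i))
      (MvPowerSeries.X 0 ^ p * MvPowerSeries.X 1 ^ (i*p+i) * (D 1 (σ v) * σ Λ)) = 0 := by
    rw [coeff_mn_monXX, if_pos ⟨le_rfl, le_rfl⟩, Nat.sub_self, Nat.sub_self,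
      coeff_mn_zero_zero, map_mul, hccD1V, zero_mul]
  have hT2 : MvPowerSeries.coeff (R := k) (mn p (i*p+i))
      (MvPowerSeries.X 0 ^ (p+1) * MvPowerSeries.X 1 ^ 0
        * (MvPowerSeries.X 1 ^ (i*p+i) * D 0 (σ Λ) * D 1 (σ v))) = 0 := by
    rw [coeff_mn_monXX, if_neg]
    rintro ⟨hh, -⟩; omega
  have hT3 : MvPowerSeries.coeff (R := k) (mn p (i*p+i))
      ((D 1 (σ v) * D 0 lam) * MvPowerSeries.X 1 ^ a) = 0 := by
    rw [coeff_mn_mul_X1pow, if_neg (by omega)]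
  have hR1 : MvPowerSeries.coeff (R := k) (mn p (i*p+i))
      (MvPowerSeries.X 0 ^ p * MvPowerSeries.X 1 ^ (i*p)
        * (MvPowerSeries.C (σ := Fin 2) (R := k) f₀ * D 0 (σ v))) = f₀ * e₀ := by
    rw [coeff_mn_monXX, if_pos ⟨le_rfl, by omega⟩, Nat.sub_self]
    have hii : i*p+i - i*p = i := by omega
    rw [hii, MvPowerSeries.coeff_C_mul, hcfD0V]
  have hR2 : MvPowerSeries.coeff (R := k) (mn p (i*p+i))
      (MvPowerSeries.X 0 ^ (p+1) * MvPowerSeries.X 1 ^ 0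
        * ((((i*p+i : ℕ) : MvPowerSeries (Fin 2) k) * MvPowerSeries.X 1 ^ (i*p+i-1) * σ Λ
          + MvPowerSeries.X 1 ^ (i*p+i) * D 1 (σ Λ)) * D 0 (σ v))) = 0 := by
    rw [coeff_mn_monXX, if_neg]
    rintro ⟨hh, -⟩; omega
  have hR3 : MvPowerSeries.coeff (R := k) (mn p (i*p+i))
      ((D 0 (σ v) * D 1 lam) * MvPowerSeries.X 1 ^ a) = 0 := by
    rw [coeff_mn_mul_X1pow, if_neg (by omega)]
  rw [map_sub, map_add, map_sub, map_add, hT1, hT2, hT3, hR1, hR2, hR3] at hfin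
  have hfe : f₀ * e₀ = 0 := by linear_combination -hfin
  exact (mul_ne_zero hf he) hfe
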